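/- Let E be a topological space; let g₀ ∈ C_B((0,∞)) separate and strongly separate points on (0,∞); let M ⊆ C_B(E) be countable and separate and strongly separate points on E; and for each n ∈ ℕ let F_n, H_n ⊆ C(ℝⁿ) be uniformly dense on compacts of ℝⁿ. Then 𝔇_{g₀}( 𝔑(M,{F_n}), {H_n} ), i.e. the maps μ ↦ h( g₀(μ(E)), ∫_E φ₂ d(μ/μ(E)), …, ∫_E φ_n d(μ/μ(E)) ) with n ∈ ℕ, h ∈ H_n and φ₂,…,φ_n ∈ 𝔑(M,{F_n}), form a uniformly dense subset of C_U( M⁺(E), 𝔖_{𝔚_{g₀}[C_U(E,𝔖_M)]} ). -/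

import Mathlib

open Set Filter Topology MeasureTheory

/-- `D` separates points on the subset `A ⊆ X`. -/
def SepPtsOn {X : Type*} (D : Set (X → ℝ)) (A : Set X) : Prop :=
  ∀ x ∈ A, ∀ y ∈ A, x ≠ y → ∃ f ∈ D, f x ≠ f y

/-- `D` strongly separates points on the subset `A ⊆ X` (subspace topology). -/
def SSepPtsOn {X : Type*} [TopologicalSpace X] (D : Set (X → ℝ)) (A : Set X) : Prop :=
  ∀ x ∈ A, ∀ O : Set X, IsOpen O → x ∈ O →
    ∃ (k : ℕ) (f : Fin k → X → ℝ), (∀ i, f i ∈ D) ∧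
      ∃ ε > (0 : ℝ), ∀ y ∈ A \ O, ∃ i, ε ≤ |f i y - f i x|

/-- A family `D` of real-valued functions separates points on `X`. -/
def SepPts {X : Type*} (D : Set (X → ℝ)) : Prop :=
  ∀ x y : X, x ≠ y → ∃ g ∈ D, g x ≠ g y

/-- A family `M` strongly separates points on the topological space `X`. -/
def SSepPts {X : Type*} [TopologicalSpace X] (M : Set (X → ℝ)) : Prop :=
  ∀ (x : X) (O : Set X), IsOpen O → x ∈ O →
    ∃ (k : ℕ) (g : Fin k → X → ℝ), (∀ i, g i ∈ M) ∧
      ∃ ε > (0 : ℝ), ∀ y, y ∉ O → ∃ i, ε ≤ |g i y - g i x|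

/-- `F` is uniformly dense in `G`. -/
def UnifDense {X : Type*} (F G : Set (X → ℝ)) : Prop :=
  ∀ g ∈ G, ∀ ε > 0, ∃ f ∈ F, ∀ x, |f x - g x| < ε

/-- `F ⊆ C(ℝⁿ)` is uniformly dense on the compacts of `ℝⁿ`. -/
def DenseOnCompacts {n : ℕ} (F : Set ((Fin n → ℝ) → ℝ)) : Prop :=
  (∀ f ∈ F, Continuous f) ∧
  ∀ K : Set (Fin n → ℝ), IsCompact K → ∀ g : (Fin n → ℝ) → ℝ, ContinuousOn g K →
    ∀ ε > 0, ∃ f ∈ F, ∀ x ∈ K, |f x - g x| < ε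

/-- The topological neural networks `𝔑(M, {F_n})`. -/
def NNet {X : Type*} (M : Set (X → ℝ)) (F : ∀ n : ℕ, Set ((Fin n → ℝ) → ℝ)) :
    Set (X → ℝ) :=
  { φ | ∃ n : ℕ, 0 < n ∧ ∃ (f : (Fin n → ℝ) → ℝ) (g : Fin n → X → ℝ),
      f ∈ F n ∧ (∀ i, g i ∈ M) ∧ φ = fun x => f fun i => g i x }

/-- The uniformity `𝔖_D` on `Y`: the pullback of the product uniformity of `ℝ^D`
along the evaluation map `y ↦ (g(y))_{g ∈ D}`. -/
noncomputable def SM {Y : Type*} (D : Set (Y → ℝ)) : UniformSpace Y :=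
  UniformSpace.comap (fun y (g : D) => (g : Y → ℝ) y) inferInstance

/-- `C_U(Y, u)`: real-valued functions on `Y` uniformly continuous for `u`. -/
def CU {Y : Type*} (u : UniformSpace Y) : Set (Y → ℝ) :=
  { φ | @UniformContinuous Y ℝ u inferInstance φ }

/-- The nonzero finite Borel measures on `E`. -/
abbrev Mplus (E : Type*) [MeasurableSpace E] : Type _ :=
  {μ : Measure E // IsFiniteMeasure μ ∧ μ ≠ 0}

/-- The weak topology on `M⁺(E)`. -/
noncomputable instance MplusTop (E : Type*) [TopologicalSpace E] [MeasurableSpace E] :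
    TopologicalSpace (Mplus E) :=
  ⨅ f : BoundedContinuousFunction E ℝ,
    TopologicalSpace.induced (fun μ : Mplus E => ∫ x, f x ∂(μ.1)) inferInstance

/-- The normalization `μ/μ(E)` of a nonzero finite measure. -/
noncomputable def nrm {E : Type*} [MeasurableSpace E] (μ : Mplus E) : Measure E :=
  (μ.1 Set.univ)⁻¹ • μ.1

/-- The functionals `𝔚_{g₀}[D]` on `M⁺(E)`. -/
noncomputable def Wfun {E : Type*} [TopologicalSpace E] [MeasurableSpace E]
    (g₀ : ℝ → ℝ) (D : Set (E → ℝ)) : Set (Mplus E → ℝ) :=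
  { F | (∃ g ∈ D, F = fun μ => ∫ x, g x ∂(nrm μ)) ∨
        F = fun μ => g₀ ((μ.1 Set.univ).toReal) }

/-- The distributional neural networks `𝔇_{g₀}(D, {H_n})`. -/
noncomputable def DNN {E : Type*} [TopologicalSpace E] [MeasurableSpace E]
    (g₀ : ℝ → ℝ) (D : Set (E → ℝ)) (F : ∀ n : ℕ, Set ((Fin n → ℝ) → ℝ)) :
    Set (Mplus E → ℝ) :=
  { φ | ∃ n : ℕ, 0 < n ∧ ∃ (f : (Fin n → ℝ) → ℝ) (h : Fin n → E → ℝ),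
      f ∈ F n ∧ (∀ i : Fin n, i.1 ≠ 0 → h i ∈ D) ∧
      φ = fun μ => f fun i =>
        if i.1 = 0 then g₀ ((μ.1 Set.univ).toReal) else ∫ x, h i x ∂(nrm μ) }

section Aux

lemma exists_pos_le_fin {k : ℕ} (δv : Fin k → ℝ) (h : ∀ i, 0 < δv i) :
    ∃ δ > (0:ℝ), ∀ i, δ ≤ δv i := by
  rcases Nat.eq_zero_or_pos k with hk | hk
  · subst hk; exact ⟨1, one_pos, fun i => i.elim0⟩
  · have hne : (Finset.univ : Finset (Fin k)).Nonempty := ⟨⟨0, hk⟩, Finset.mem_univ _⟩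
    refine ⟨Finset.univ.inf' hne δv, ?_, fun i => Finset.inf'_le _ (Finset.mem_univ i)⟩
    rw [gt_iff_lt, Finset.lt_inf'_iff]
    exact fun i _ => h i

lemma SM_modulus {Y : Type*} (D : Set (Y → ℝ)) (φ : Y → ℝ)
    (hφ : φ ∈ CU (SM D)) {ε : ℝ} (hε : 0 < ε) :
    ∃ (k : ℕ) (g : Fin k → Y → ℝ), (∀ i, g i ∈ D) ∧
      ∃ δ > (0:ℝ), ∀ x y, (∀ i, |g i x - g i y| < δ) → |φ x - φ y| < ε := by
  have hU : {p : Y × Y | dist (φ p.1) (φ p.2) < ε} ∈ @uniformity Y (SM D) :=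
    hφ (Metric.dist_mem_uniformity hε)
  rw [show (SM D) = UniformSpace.comap (fun y (g : D) => (g : Y → ℝ) y) inferInstance from rfl] at hU
  rw [uniformity_comap] at hU
  rw [Pi.uniformity, Filter.comap_iInf] at hU
  simp only [Filter.comap_comap] at hU
  rw [Filter.mem_iInf_finite] at hU
  obtain ⟨t, ht⟩ := hU
  rw [Filter.mem_iInf_finset] at ht
  obtain ⟨p, hp, hUeq⟩ := ht
  set k := t.card with hk
  let e := t.equivFin
  refine ⟨k, fun i => ((e.symm i : D) : Y → ℝ), fun i => (e.symm i : D).2, ?_⟩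
  have hp' : ∀ i : Fin k, ∃ δ > (0:ℝ), ∀ x y : Y,
      dist ((((e.symm i : D) : Y → ℝ)) x) ((((e.symm i : D) : Y → ℝ)) y) < δ →
        (x, y) ∈ p (e.symm i : D) := by
    intro i
    have hmem := hp _ (e.symm i).2
    rw [Filter.mem_comap] at hmem
    obtain ⟨V, hV, hVsub⟩ := hmem
    obtain ⟨δ, hδ, hball⟩ := Metric.mem_uniformity_dist.mp hV
    exact ⟨δ, hδ, fun x y hxy => hVsub (Set.mem_preimage.mpr (hball hxy))⟩
  choose δv hδv hprop using hp'
  obtain ⟨δ, hδ, hle⟩ := exists_pos_le_fin δv hδv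
  refine ⟨δ, hδ, fun x y hxy => ?_⟩
  have : (x, y) ∈ {p : Y × Y | dist (φ p.1) (φ p.2) < ε} := by
    rw [hUeq]
    simp only [Set.mem_iInter]
    intro g hg
    have hi : (⟨g, hg⟩ : {a // a ∈ t}) = e.symm (e ⟨g, hg⟩) := (e.symm_apply_apply _).symm
    have := hprop (e ⟨g, hg⟩) x y (by
      rw [Real.dist_eq]
      exact lt_of_lt_of_le (hxy (e ⟨g, hg⟩)) (hle _))
    rwa [← hi] at this
  simpa [Real.dist_eq] using this

lemma tb_range {Y : Type*} {k : ℕ} (q : Y → Fin k → ℝ) (R : ℝ)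
    (hR : ∀ y j, |q y j| ≤ R) : TotallyBounded (Set.range q) := by
  refine TotallyBounded.subset ?_ ((isCompact_closedBall 0 (max R 0)).totallyBounded)
  rintro _ ⟨y, rfl⟩
  rw [Metric.mem_closedBall, dist_pi_le_iff (le_max_right R 0)]
  intro j
  rw [Real.dist_eq]
  simpa using (hR y j).trans (le_max_left R 0)

lemma factor_cont {Y : Type*} {k : ℕ} (q : Y → Fin k → ℝ)
    (htb : TotallyBounded (Set.range q)) (φ : Y → ℝ) {δ η : ℝ} (hδ : 0 < δ) (hη : 0 < η)
    (hmod : ∀ x y, (∀ j, |q x j - q y j| < δ) → |φ x - φ y| < η) :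
    ∃ f : (Fin k → ℝ) → ℝ, Continuous f ∧ ∀ x, |f (q x) - φ x| ≤ η := by
  classical
  obtain ⟨t, hts, htfin, hcov⟩ := totallyBounded_iff_subset.mp htb
    {p : (Fin k → ℝ) × (Fin k → ℝ) | dist p.1 p.2 < δ/3}
    (Metric.dist_mem_uniformity (by linarith))
  set s : Finset (Fin k → ℝ) := htfin.toFinset with hs
  set val : (Fin k → ℝ) → ℝ := fun c => if h : ∃ x, q x = c then φ h.choose else 0 with hval
  set w : (Fin k → ℝ) → (Fin k → ℝ) → ℝ := fun c u => max 0 (2*δ/3 - dist u c) with hw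
  set Wt : (Fin k → ℝ) → ℝ := fun u => ∑ c ∈ s, w c u with hWt
  set Den : (Fin k → ℝ) → ℝ := fun u => Wt u + max 0 (δ/3 - Wt u) with hDen
  have hwnn : ∀ c u, 0 ≤ w c u := fun c u => le_max_left _ _
  have hWnn : ∀ u, 0 ≤ Wt u := fun u => Finset.sum_nonneg fun c _ => hwnn c u
  have hWtcont : Continuous Wt := by
    apply continuous_finset_sum
    intro c _
    exact continuous_const.max (continuous_const.sub (continuous_id.dist continuous_const))
  have hDenpos : ∀ u, δ/3 ≤ Den u := by
    intro u
    calc δ/3 = Wt u + (δ/3 - Wt u) := by ring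
    _ ≤ Den u := by exact add_le_add le_rfl (le_max_right _ _)
  refine ⟨fun u => (∑ c ∈ s, w c u * val c) / Den u, ?_, ?_⟩
  · apply Continuous.div
    · exact continuous_finset_sum _ fun c _ =>
        (continuous_const.max (continuous_const.sub (continuous_id.dist continuous_const))).mul
          continuous_const
    · exact hWtcont.add (continuous_const.max (continuous_const.sub hWtcont))
    · intro u
      exact ne_of_gt (lt_of_lt_of_le (by linarith) (hDenpos u))
  · intro x
    set u : Fin k → ℝ := q x with hu
    have hmemA : u ∈ Set.range q := ⟨x, rfl⟩
    obtain ⟨c₀, hc₀t, hc₀d⟩ := by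
      have := hcov hmemA
      simpa using this
    have hc₀s : c₀ ∈ s := htfin.mem_toFinset.mpr hc₀t
    have hwc₀ : δ/3 < w c₀ u := by
      have : δ/3 < 2*δ/3 - dist u c₀ := by linarith
      exact lt_of_lt_of_le this (le_max_right _ _)
    have hWpos : δ/3 < Wt u :=
      lt_of_lt_of_le hwc₀ (Finset.single_le_sum (fun c _ => hwnn c u) hc₀s)
    have hDu : Den u = Wt u := by
      have : max 0 (δ/3 - Wt u) = 0 := max_eq_left (by linarith)
      rw [hDen]; simp only []; rw [this, add_zero]
    have hterm : ∀ c ∈ s, |w c u * (val c - φ x)| ≤ w c u * η := by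
      intro c hc
      rcases eq_or_lt_of_le (hwnn c u) with h0 | hpos
      · rw [← h0]; simp
      · have hdist : dist u c < 2*δ/3 := by
          by_contra hcon
          push_neg at hcon
          have : w c u = 0 := max_eq_left (by linarith)
          rw [this] at hpos; exact lt_irrefl _ hpos
        have hex : ∃ z, q z = c := by
          have := hts (htfin.mem_toFinset.mp hc)
          exact this
        have hqz : q hex.choose = c := hex.choose_spec
        have hvc : val c = φ hex.choose := dif_pos hex
        have hclose : ∀ j, |q x j - q hex.choose j| < δ := by
          intro j
          have hlt : dist u (q hex.choose) < δ := by rw [hqz]; linarith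
          have := (dist_pi_lt_iff hδ).mp hlt j
          rwa [Real.dist_eq] at this
        have := hmod x hex.choose hclose
        rw [abs_mul, abs_of_nonneg (hwnn c u), hvc]
        apply mul_le_mul_of_nonneg_left _ (hwnn c u)
        rw [abs_sub_comm]
        exact le_of_lt this
    have hnum : |∑ c ∈ s, w c u * (val c - φ x)| ≤ Wt u * η := by
      calc |∑ c ∈ s, w c u * (val c - φ x)| ≤ ∑ c ∈ s, |w c u * (val c - φ x)| :=
            Finset.abs_sum_le_sum_abs _ _
      _ ≤ ∑ c ∈ s, w c u * η := Finset.sum_le_sum hterm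
      _ = Wt u * η := by rw [hWt]; rw [Finset.sum_mul]
    have hWne : Wt u ≠ 0 := by linarith
    have heq : (∑ c ∈ s, w c u * val c) / Den u - φ x
        = (∑ c ∈ s, w c u * (val c - φ x)) / Wt u := by
      rw [hDu]
      rw [div_sub' hWne]
      congr 1
      simp only [hWt]
      rw [Finset.sum_mul, ← Finset.sum_sub_distrib]
      exact Finset.sum_congr rfl fun c _ => by ring
    rw [heq, abs_div, abs_of_pos (by linarith : (0:ℝ) < Wt u)]
    rw [div_le_iff₀ (by linarith : (0:ℝ) < Wt u)]
    calc |∑ c ∈ s, w c u * (val c - φ x)| ≤ Wt u * η := hnum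
    _ = η * Wt u := mul_comm _ _

lemma uc_of_mem {Y : Type*} {D : Set (Y → ℝ)} {g : Y → ℝ} (hg : g ∈ D) :
    @UniformContinuous Y ℝ (SM D) _ g := by
  have h1 : @UniformContinuous Y (D → ℝ) (SM D) _ (fun y (g : D) => (g : Y → ℝ) y) :=
    uniformContinuous_comap
  exact @UniformContinuous.comp Y (D → ℝ) ℝ (SM D) _ _ _ _ (Pi.uniformContinuous_proj _ ⟨g, hg⟩) h1

lemma comp_uc {Y : Type*} [u : UniformSpace Y] {k : ℕ} {q : Y → Fin k → ℝ}
    (hq : UniformContinuous q) {R : ℝ} (hR : ∀ y j, |q y j| ≤ R)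
    {f : (Fin k → ℝ) → ℝ} (hf : Continuous f) : UniformContinuous fun y => f (q y) := by
  set K := Metric.closedBall (0 : Fin k → ℝ) (max R 0) with hK'
  have hK : IsCompact K := isCompact_closedBall _ _
  have hmem : ∀ y, q y ∈ K := fun y => by
    rw [hK', Metric.mem_closedBall, dist_pi_le_iff (le_max_right R 0)]
    intro j; rw [Real.dist_eq]; simpa using (hR y j).trans (le_max_left R 0)
  have hucf : UniformContinuousOn f K := hK.uniformContinuousOn_of_continuous hf.continuousOn
  rw [Metric.uniformContinuousOn_iff] at hucf
  rw [UniformContinuous]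
  refine Metric.uniformity_basis_dist.tendsto_right_iff.mpr ?_
  intro ε hε
  obtain ⟨δ, hδ, hfd⟩ := hucf ε hε
  have hqd : {p : Y × Y | dist (q p.1) (q p.2) < δ} ∈ uniformity Y :=
    hq (Metric.dist_mem_uniformity hδ)
  filter_upwards [hqd] with p hp
  exact hfd _ (hmem p.1) _ (hmem p.2) hp

lemma cu_continuous {Y : Type*} [tY : TopologicalSpace Y] {D : Set (Y → ℝ)}
    (hDc : ∀ g ∈ D, Continuous g) {φ : Y → ℝ} (hφ : φ ∈ CU (SM D)) : Continuous φ := by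
  have h1 : @Continuous Y ℝ ((SM D).toTopologicalSpace) _ φ :=
    @UniformContinuous.continuous _ _ (SM D) _ _ hφ
  have h2 : (SM D).toTopologicalSpace
      = TopologicalSpace.induced (fun y (g : D) => (g : Y → ℝ) y) Pi.topologicalSpace :=
    UniformSpace.toTopologicalSpace_comap
  have h3 : Continuous (fun y (g : D) => (g : Y → ℝ) y) := continuous_pi fun g => hDc g g.2
  have h4 : tY ≤ TopologicalSpace.induced (fun y (g : D) => (g : Y → ℝ) y) Pi.topologicalSpace :=
    continuous_iff_le_induced.mp h3
  exact continuous_le_dom (h2 ▸ h4) h1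

lemma cu_bounded {Y : Type*} {D : Set (Y → ℝ)} (hDb : ∀ g ∈ D, ∃ C, ∀ x, |g x| ≤ C)
    {φ : Y → ℝ} (hφ : φ ∈ CU (SM D)) : ∃ C, ∀ x, |φ x| ≤ C := by
  classical
  obtain ⟨k, g, hgD, δ, hδ, hmod⟩ := SM_modulus D φ hφ one_pos
  choose Cv hCv using fun i => hDb (g i) (hgD i)
  set R : ℝ := ∑ j, |Cv j| with hR
  set q : Y → Fin k → ℝ := fun y i => g i y with hq
  have hqR : ∀ y j, |q y j| ≤ R := by
    intro y j
    calc |q y j| ≤ Cv j := hCv j y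
    _ ≤ |Cv j| := le_abs_self _
    _ ≤ R := Finset.single_le_sum (fun i _ => abs_nonneg (Cv i)) (Finset.mem_univ j)
  obtain ⟨t, hts, htfin, hcov⟩ := totallyBounded_iff_subset.mp (tb_range q R hqR)
    {p : (Fin k → ℝ) × (Fin k → ℝ) | dist p.1 p.2 < δ}
    (Metric.dist_mem_uniformity hδ)
  set s : Finset (Fin k → ℝ) := htfin.toFinset with hs
  set val : (Fin k → ℝ) → ℝ := fun c => if h : ∃ x, q x = c then φ h.choose else 0 with hval
  refine ⟨1 + ∑ c ∈ s, |val c|, fun y => ?_⟩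
  obtain ⟨c, hct, hcd⟩ := by
    have := hcov ⟨y, rfl⟩
    simpa using this
  have hcs : c ∈ s := htfin.mem_toFinset.mpr hct
  have hex : ∃ z, q z = c := hts hct
  have hqz : q hex.choose = c := hex.choose_spec
  have hvc : val c = φ hex.choose := dif_pos hex
  have hclose : ∀ j, |q y j - q hex.choose j| < δ := by
    intro j
    have hlt : dist (q y) (q hex.choose) < δ := by rw [hqz]; exact hcd
    have := (dist_pi_lt_iff hδ).mp hlt j
    rwa [Real.dist_eq] at this
  have h1 := hmod y hex.choose (by intro i; exact hclose i)
  have h2 : |val c| ≤ ∑ c ∈ s, |val c| :=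
    Finset.single_le_sum (fun c _ => abs_nonneg (val c)) hcs
  have h3 : |φ y| ≤ |φ y - φ hex.choose| + |val c| := by
    rw [hvc]
    simpa using abs_add_le (φ y - φ hex.choose) (φ hex.choose)
  linarith

end Aux


section NNetAux

variable {X : Type*} [TopologicalSpace X] {M : Set (X → ℝ)}
  {F : ∀ n : ℕ, Set ((Fin n → ℝ) → ℝ)}

lemma nnet_cont (hF : ∀ n, DenseOnCompacts (F n)) (hMc : ∀ f ∈ M, Continuous f)
    {φ : X → ℝ} (hφ : φ ∈ NNet M F) : Continuous φ := by
  obtain ⟨n, hn, f, g, hf, hg, rfl⟩ := hφ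
  exact ((hF n).1 f hf).comp (continuous_pi fun i => hMc _ (hg i))

lemma nnet_bounded (hF : ∀ n, DenseOnCompacts (F n)) (hMb : ∀ f ∈ M, ∃ C, ∀ x, |f x| ≤ C)
    {φ : X → ℝ} (hφ : φ ∈ NNet M F) : ∃ C, ∀ x, |φ x| ≤ C := by
  obtain ⟨n, hn, f, g, hf, hg, rfl⟩ := hφ
  choose Cv hCv using fun i => hMb (g i) (hg i)
  set R : ℝ := ∑ j, |Cv j| with hR
  set q : X → Fin n → ℝ := fun x i => g i x with hq
  have hqR : ∀ y j, |q y j| ≤ R := fun y j =>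
    ((hCv j y).trans (le_abs_self _)).trans
      (Finset.single_le_sum (fun i _ => abs_nonneg (Cv i)) (Finset.mem_univ j))
  have hmem : ∀ y, q y ∈ Metric.closedBall (0 : Fin n → ℝ) (max R 0) := fun y => by
    rw [Metric.mem_closedBall, dist_pi_le_iff (le_max_right R 0)]
    intro j; rw [Real.dist_eq]; simpa using (hqR y j).trans (le_max_left R 0)
  obtain ⟨C, hC⟩ := (isCompact_closedBall (0 : Fin n → ℝ) (max R 0)).exists_bound_of_continuousOn
    ((hF n).1 f hf).continuousOn
  exact ⟨C, fun x => by simpa [Real.norm_eq_abs] using hC (q x) (hmem x)⟩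

lemma nnet_uc (hF : ∀ n, DenseOnCompacts (F n)) (hMb : ∀ f ∈ M, ∃ C, ∀ x, |f x| ≤ C)
    {φ : X → ℝ} (hφ : φ ∈ NNet M F) : φ ∈ CU (SM M) := by
  obtain ⟨n, hn, f, g, hf, hg, rfl⟩ := hφ
  choose Cv hCv using fun i => hMb (g i) (hg i)
  set R : ℝ := ∑ j, |Cv j| with hR
  have hqR : ∀ (y : X) j, |g j y| ≤ R := fun y j =>
    ((hCv j y).trans (le_abs_self _)).trans
      (Finset.single_le_sum (fun i _ => abs_nonneg (Cv i)) (Finset.mem_univ j))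
  have hquc : @UniformContinuous X (Fin n → ℝ) (SM M) _ (fun x i => g i x) :=
    (@uniformContinuous_pi (Fin n) (fun _ => ℝ) _ X (SM M) _).mpr fun i => uc_of_mem (hg i)
  exact @comp_uc X (SM M) n (fun x i => g i x) hquc R hqR f ((hF n).1 f hf)

lemma nnet_dense (hMne : M.Nonempty) (hMb : ∀ f ∈ M, ∃ C, ∀ x, |f x| ≤ C)
    (hF : ∀ n, DenseOnCompacts (F n)) :
    ∀ φ ∈ CU (SM M), ∀ ε > (0:ℝ), ∃ ψ ∈ NNet M F, ∀ x, |ψ x - φ x| < ε := by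
  intro φ hφ ε hε
  obtain ⟨k, g, hgM, δ, hδ, hmod⟩ := SM_modulus M φ hφ (by positivity : (0:ℝ) < ε/3)
  set g' : Fin (k+1) → X → ℝ := Fin.cons hMne.choose g with hg'
  have hg'M : ∀ i, g' i ∈ M := by
    intro i
    refine Fin.cases ?_ ?_ i
    · exact hMne.choose_spec
    · intro j; simpa [hg'] using hgM j
  set q : X → Fin (k+1) → ℝ := fun x i => g' i x with hq
  have hmod' : ∀ x y, (∀ j, |q x j - q y j| < δ) → |φ x - φ y| < ε/3 := by
    intro x y hxy
    exact hmod x y fun i => by simpa [hq, hg'] using hxy i.succ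
  choose Cv hCv using fun i => hMb (g' i) (hg'M i)
  set R : ℝ := ∑ j, |Cv j| with hR
  have hqR : ∀ y j, |q y j| ≤ R := fun y j =>
    ((hCv j y).trans (le_abs_self _)).trans
      (Finset.single_le_sum (fun i _ => abs_nonneg (Cv i)) (Finset.mem_univ j))
  obtain ⟨f, hfc, hfappr⟩ := factor_cont q (tb_range q R hqR) φ hδ
    (by positivity : (0:ℝ) < ε/3) hmod'
  set K := Metric.closedBall (0 : Fin (k+1) → ℝ) (max R 0) with hK'
  have hmem : ∀ y, q y ∈ K := fun y => by
    rw [hK', Metric.mem_closedBall, dist_pi_le_iff (le_max_right R 0)]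
    intro j; rw [Real.dist_eq]; simpa using (hqR y j).trans (le_max_left R 0)
  obtain ⟨f', hf', hf'appr⟩ := (hF (k+1)).2 K (isCompact_closedBall _ _) f hfc.continuousOn
    (ε/3) (by positivity)
  refine ⟨fun x => f' (q x), ⟨k+1, Nat.succ_pos k, f', g', hf', hg'M, rfl⟩, fun x => ?_⟩
  calc |f' (q x) - φ x| ≤ |f' (q x) - f (q x)| + |f (q x) - φ x| := abs_sub_le _ _ _
  _ < ε/3 + ε/3 := add_lt_add_of_lt_of_le (hf'appr (q x) (hmem x)) (hfappr x)
  _ < ε := by linarith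

end NNetAux


section MplusAux

variable {E : Type*} [TopologicalSpace E] [MeasurableSpace E] [BorelSpace E]

lemma mplus_univ_pos (μ : Mplus E) : ((μ.1 Set.univ).toReal) ∈ Set.Ioi (0:ℝ) := by
  haveI := μ.2.1
  rw [Set.mem_Ioi]
  exact ENNReal.toReal_pos (MeasureTheory.Measure.measure_univ_ne_zero.mpr μ.2.2)
    (MeasureTheory.measure_ne_top _ _)

lemma nrm_prob (μ : Mplus E) : IsProbabilityMeasure (nrm μ) := by
  haveI := μ.2.1
  constructor
  rw [nrm, MeasureTheory.Measure.smul_apply, smul_eq_mul]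
  exact ENNReal.inv_mul_cancel (MeasureTheory.Measure.measure_univ_ne_zero.mpr μ.2.2)
    (MeasureTheory.measure_ne_top _ _)

lemma nrm_integral_bound (μ : Mplus E) {g : E → ℝ} {C : ℝ} (hC : ∀ x, |g x| ≤ C) :
    |∫ x, g x ∂(nrm μ)| ≤ C := by
  haveI := nrm_prob μ
  have := MeasureTheory.norm_integral_le_of_norm_le_const (μ := nrm μ) (f := g) (C := C)
    (Filter.Eventually.of_forall fun x => by simpa [Real.norm_eq_abs] using hC x)
  simpa [Real.norm_eq_abs, measure_univ] using this

lemma nrm_integrable (μ : Mplus E) {g : E → ℝ} (hc : Continuous g) {C : ℝ}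
    (hC : ∀ x, |g x| ≤ C) : MeasureTheory.Integrable g (nrm μ) := by
  haveI := nrm_prob μ
  exact (MeasureTheory.integrable_const C).mono' hc.aestronglyMeasurable
    (Filter.Eventually.of_forall fun x => by simpa [Real.norm_eq_abs] using hC x)

lemma nrm_integral_diff (μ : Mplus E) {g h : E → ℝ}
    (hg : MeasureTheory.Integrable g (nrm μ)) (hh : MeasureTheory.Integrable h (nrm μ))
    {d : ℝ} (hd : ∀ x, |g x - h x| ≤ d) :
    |∫ x, g x ∂(nrm μ) - ∫ x, h x ∂(nrm μ)| ≤ d := by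
  haveI := nrm_prob μ
  rw [← MeasureTheory.integral_sub hg hh]
  exact nrm_integral_bound μ hd

lemma assemble {g₀ : ℝ → ℝ} {C₀ : ℝ} (hC₀ : ∀ x ∈ Set.Ioi (0:ℝ), |g₀ x| ≤ C₀)
    {M : Set (E → ℝ)} {F H : ∀ n : ℕ, Set ((Fin n → ℝ) → ℝ)}
    (hMc : ∀ f ∈ M, Continuous f) (hMb : ∀ f ∈ M, ∃ C, ∀ x, |f x| ≤ C)
    (hF : ∀ n, DenseOnCompacts (F n)) (hH : ∀ n, DenseOnCompacts (H n))
    (Φ : Mplus E → ℝ) {ε δ' : ℝ} (hε : 0 < ε) (hδ' : 0 < δ')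
    {n : ℕ} (hn : 0 < n) (h : Fin n → E → ℝ)
    (hhmem : ∀ i : Fin n, i.1 ≠ 0 → h i ∈ NNet M F)
    (hmodT : ∀ μ ν : Mplus E,
      (∀ j : Fin n, |(if j.1 = 0 then g₀ ((μ.1 Set.univ).toReal) else ∫ x, h j x ∂nrm μ)
           - (if j.1 = 0 then g₀ ((ν.1 Set.univ).toReal) else ∫ x, h j x ∂nrm ν)| < δ')
      → |Φ μ - Φ ν| < ε/3) :
    ∃ Ψ ∈ DNN g₀ (NNet M F) H, ∀ μ, |Ψ μ - Φ μ| < ε := by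
  set T : Mplus E → Fin n → ℝ := fun μ j =>
    if j.1 = 0 then g₀ ((μ.1 Set.univ).toReal) else ∫ x, h j x ∂nrm μ with hT
  have hTb : ∀ j, ∃ C, ∀ μ, |T μ j| ≤ C := by
    intro j
    by_cases hj : j.1 = 0
    · exact ⟨C₀, fun μ => by
        simp only [hT, if_pos hj]; exact hC₀ _ (mplus_univ_pos μ)⟩
    · obtain ⟨C, hC⟩ := nnet_bounded hF hMb (hhmem j hj)
      exact ⟨C, fun μ => by simp only [hT, if_neg hj]; exact nrm_integral_bound μ hC⟩
  choose Cv hCv using hTb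
  set R : ℝ := ∑ j, |Cv j| with hR
  have hqR : ∀ μ j, |T μ j| ≤ R := fun μ j =>
    ((hCv j μ).trans (le_abs_self _)).trans
      (Finset.single_le_sum (fun i _ => abs_nonneg (Cv i)) (Finset.mem_univ j))
  obtain ⟨f, hfc, hfappr⟩ := factor_cont T (tb_range T R hqR) Φ hδ'
    (by positivity : (0:ℝ) < ε/3) hmodT
  have hmem : ∀ μ, T μ ∈ Metric.closedBall (0 : Fin n → ℝ) (max R 0) := fun μ => by
    rw [Metric.mem_closedBall, dist_pi_le_iff (le_max_right R 0)]
    intro j; rw [Real.dist_eq]; simpa using (hqR μ j).trans (le_max_left R 0)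
  obtain ⟨f', hf', hf'appr⟩ := (hH n).2 (Metric.closedBall 0 (max R 0))
    (isCompact_closedBall _ _) f hfc.continuousOn (ε/3) (by positivity)
  refine ⟨fun μ => f' (T μ), ⟨n, hn, f', h, hf', hhmem, rfl⟩, fun μ => ?_⟩
  calc |f' (T μ) - Φ μ| ≤ |f' (T μ) - f (T μ)| + |f (T μ) - Φ μ| := abs_sub_le _ _ _
  _ < ε/3 + ε/3 := add_lt_add_of_lt_of_le (hf'appr (T μ) (hmem μ)) (hfappr μ)
  _ < ε := by linarith

end MplusAux


/-- Let `g₀ ∈ C_B((0,∞))` separate and strongly separate points on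
`(0,∞)`; let `M ⊆ C_B(E)` be countable and separate and strongly separate points
on `E`; and let `F_n, H_n ⊆ C(ℝⁿ)` be uniformly dense on the compacts of `ℝⁿ`.
Then `𝔇_{g₀}(𝔑(M, {F_n}), {H_n})` is a uniformly dense subset of
`C_U(M⁺(E), 𝔖_{𝔚_{g₀}[C_U(E, 𝔖_M)]})`. -/
theorem stmt3 {E : Type*} [TopologicalSpace E] [MeasurableSpace E] [BorelSpace E]
    (g₀ : ℝ → ℝ)
    (hg₀c : ContinuousOn g₀ (Set.Ioi 0)) (hg₀b : ∃ C, ∀ x ∈ Set.Ioi (0:ℝ), |g₀ x| ≤ C)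
    (hg₀sep : SepPtsOn {g₀} (Set.Ioi 0)) (hg₀ssp : SSepPtsOn {g₀} (Set.Ioi 0))
    (M : Set (E → ℝ)) (hMcount : M.Countable)
    (hMc : ∀ f ∈ M, Continuous f) (hMb : ∀ f ∈ M, ∃ C, ∀ x, |f x| ≤ C)
    (hsep : SepPts M) (hssp : SSepPts M)
    (F H : ∀ n : ℕ, Set ((Fin n → ℝ) → ℝ))
    (hF : ∀ n, DenseOnCompacts (F n)) (hH : ∀ n, DenseOnCompacts (H n)) :
    DNN g₀ (NNet M F) H ⊆ CU (SM (Wfun g₀ (CU (SM M)))) ∧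
      UnifDense (DNN g₀ (NNet M F) H) (CU (SM (Wfun g₀ (CU (SM M))))) := by
  classical
  obtain ⟨C₀, hC₀⟩ := hg₀b
  set D : Set (E → ℝ) := CU (SM M) with hD
  set W : Set (Mplus E → ℝ) := Wfun g₀ D with hWdef
  have hsub : DNN g₀ (NNet M F) H ⊆ CU (SM W) := by
    rintro Φ ⟨n, hn, f, h, hf, hh, rfl⟩
    have hcoord : ∀ j : Fin n, (fun μ : Mplus E =>
        if j.1 = 0 then g₀ ((μ.1 Set.univ).toReal) else ∫ x, h j x ∂nrm μ) ∈ W := by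
      intro j
      by_cases hj : j.1 = 0
      · simp only [if_pos hj]
        exact Or.inr rfl
      · simp only [if_neg hj]
        exact Or.inl ⟨h j, nnet_uc hF hMb (hh j hj), rfl⟩
    set T : Mplus E → Fin n → ℝ := fun μ j =>
      if j.1 = 0 then g₀ ((μ.1 Set.univ).toReal) else ∫ x, h j x ∂nrm μ with hT
    have hTuc : @UniformContinuous (Mplus E) (Fin n → ℝ) (SM W) _ T :=
      (@uniformContinuous_pi (Fin n) (fun _ => ℝ) _ (Mplus E) (SM W) _).mpr
        fun j => uc_of_mem (hcoord j)
    have hTb : ∀ j, ∃ C, ∀ μ, |T μ j| ≤ C := by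
      intro j
      by_cases hj : j.1 = 0
      · exact ⟨C₀, fun μ => by
          simp only [hT, if_pos hj]; exact hC₀ _ (mplus_univ_pos μ)⟩
      · obtain ⟨C, hC⟩ := nnet_bounded hF hMb (hh j hj)
        exact ⟨C, fun μ => by simp only [hT, if_neg hj]; exact nrm_integral_bound μ hC⟩
    choose Cv hCv using hTb
    set R : ℝ := ∑ j, |Cv j| with hR
    have hqR : ∀ μ j, |T μ j| ≤ R := fun μ j =>
      ((hCv j μ).trans (le_abs_self _)).trans
        (Finset.single_le_sum (fun i _ => abs_nonneg (Cv i)) (Finset.mem_univ j))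
    exact @comp_uc (Mplus E) (SM W) n T hTuc R hqR f ((hH n).1 f hf)
  refine ⟨hsub, ?_⟩
  intro Φ hΦ ε hε
  obtain ⟨k, G, hGW, δ, hδ, hmod⟩ := SM_modulus W Φ hΦ (show (0:ℝ) < ε/3 by positivity)
  rcases M.eq_empty_or_nonempty with hM0 | hMne
  · -- M empty: E is a subsingleton
    have hEsub : Subsingleton E := by
      constructor
      intro a b
      by_contra hne
      obtain ⟨g, hgM, -⟩ := hsep a b hne
      rw [hM0] at hgM
      exact absurd hgM (Set.notMem_empty g)
    have hconst : ∀ (φ : E → ℝ) (μ ν : Mplus E), ∫ x, φ x ∂nrm μ = ∫ x, φ x ∂nrm ν := by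
      intro φ μ ν
      rcases isEmpty_or_nonempty E with hE | hE
      · exact absurd (MeasureTheory.Measure.eq_zero_of_isEmpty μ.1) μ.2.2
      · obtain ⟨x₀⟩ := hE
        have hφ : φ = fun _ => φ x₀ := funext fun x => by rw [Subsingleton.elim x x₀]
        haveI := nrm_prob μ; haveI := nrm_prob ν
        rw [hφ]
        simp [MeasureTheory.integral_const, measure_univ]
    refine assemble hC₀ hMc hMb hF hH Φ hε (by positivity : (0:ℝ) < δ/3) one_pos
      (fun _ : Fin 1 => (0 : E → ℝ))
      (fun j hj => absurd (Nat.lt_one_iff.mp j.2) hj) ?_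
    intro μ ν hj
    refine hmod μ ν fun i => ?_
    rcases hGW i with ⟨φi, hφi, hGi⟩ | hGi
    · rw [hGi]
      simp only []
      rw [hconst φi μ ν, sub_self, abs_zero]
      exact hδ
    · rw [hGi]
      have := hj 0
      simp only [show ((0 : Fin 1) : ℕ) = 0 from rfl, if_pos] at this
      calc |g₀ ((μ.1 Set.univ).toReal) - g₀ ((ν.1 Set.univ).toReal)| < δ/3 := this
      _ < δ := by linarith
  · -- M nonempty
    obtain ⟨f1, hf1, -⟩ := (hF 1).2 ∅ isCompact_empty 0 (continuousOn_empty _) 1 one_pos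
    have hψstar : (fun x => f1 fun _ : Fin 1 => hMne.choose x) ∈ NNet M F :=
      ⟨1, one_pos, f1, fun _ => hMne.choose, hf1, fun _ => hMne.choose_spec, rfl⟩
    have claim : ∀ i : Fin k, ∃ ψ : E → ℝ, ψ ∈ NNet M F ∧
        ((G i = fun μ => g₀ ((μ.1 Set.univ).toReal)) ∨
          ∀ μ : Mplus E, |(∫ x, ψ x ∂nrm μ) - G i μ| ≤ δ/3) := by
      intro i
      rcases hGW i with ⟨φi, hφi, hGi⟩ | hGi
      · obtain ⟨ψ, hψ, hψa⟩ := nnet_dense hMne hMb hF φi hφi (δ/3) (by positivity)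
        refine ⟨ψ, hψ, Or.inr fun μ => ?_⟩
        rw [hGi]
        have hφic : Continuous φi := cu_continuous hMc hφi
        obtain ⟨Cφ, hCφ⟩ := cu_bounded hMb hφi
        obtain ⟨Cψ, hCψ⟩ := nnet_bounded hF hMb hψ
        exact nrm_integral_diff μ (nrm_integrable μ (nnet_cont hF hMc hψ) hCψ)
          (nrm_integrable μ hφic hCφ) (fun x => le_of_lt (hψa x))
      · exact ⟨_, hψstar, Or.inl hGi⟩
    choose ψ hψmem hψalt using claim
    set h : Fin (k+1) → E → ℝ := Fin.cons (fun _ => (0:ℝ)) ψ with hh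
    have hhmem : ∀ j : Fin (k+1), j.1 ≠ 0 → h j ∈ NNet M F := by
      intro j
      refine Fin.cases ?_ ?_ j
      · intro hj; exact absurd rfl hj
      · intro i _
        simpa [hh] using hψmem i
    refine assemble hC₀ hMc hMb hF hH Φ hε (by positivity : (0:ℝ) < δ/9)
      (Nat.succ_pos k) h hhmem ?_
    intro μ ν hj
    refine hmod μ ν fun i => ?_
    have h0 := hj 0
    simp only [show ((0 : Fin (k+1)) : ℕ) = 0 from rfl, if_pos] at h0
    rcases hψalt i with hg | ha
    · rw [hg]
      calc |g₀ ((μ.1 Set.univ).toReal) - g₀ ((ν.1 Set.univ).toReal)| < δ/9 := h0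
      _ < δ := by linarith
    · have hsucc := hj i.succ
      have hs0 : (i.succ : Fin (k+1)).1 ≠ 0 := by
        simp [Fin.val_succ]
      rw [if_neg hs0, if_neg hs0] at hsucc
      have hcons : h i.succ = ψ i := by simp [hh]
      rw [hcons] at hsucc
      have h1 := ha μ
      have h2 := ha ν
      have tri : |G i μ - G i ν| ≤ |(∫ x, ψ i x ∂nrm μ) - G i μ|
          + |(∫ x, ψ i x ∂nrm μ) - (∫ x, ψ i x ∂nrm ν)|
          + |(∫ x, ψ i x ∂nrm ν) - G i ν| := by
        have t1 : |G i μ - G i ν| ≤ |G i μ - (∫ x, ψ i x ∂nrm μ)|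
            + |(∫ x, ψ i x ∂nrm μ) - G i ν| := abs_sub_le _ _ _
        have t2 : |(∫ x, ψ i x ∂nrm μ) - G i ν| ≤
            |(∫ x, ψ i x ∂nrm μ) - (∫ x, ψ i x ∂nrm ν)|
            + |(∫ x, ψ i x ∂nrm ν) - G i ν| := abs_sub_le _ _ _
        have t3 : |G i μ - (∫ x, ψ i x ∂nrm μ)| = |(∫ x, ψ i x ∂nrm μ) - G i μ| :=
          abs_sub_comm _ _
        linarith
      have : |G i μ - G i ν| < δ/3 + δ/9 + δ/3 := by linarith
      linarith
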